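/- For every k ∈ {1,…,n−1}: Δ₁(ε;k) → 1 as ε → 0⁺ and Δ₁(ε;k) → 0 as ε → 1⁻. Consequently, for every threshold t ∈ (0,1) there exists a unique ε_k ∈ (0,1) with Δ₁(ε_k;k) = t, and Δ₁(ε;k) > t holds if and only if 0 < ε < ε_k. -/

import Mathlib

open Finset Filter Topology

/-- `ψ(j,q,ε) = (j choose q)·ε^q·(1−ε)^(j−q)`. -/
noncomputable def psi (j q : ℕ) (ε : ℝ) : ℝ :=
  (j.choose q : ℝ) * ε ^ q * (1 - ε) ^ (j - q)

/-- The `δ → 1` limit of the continuation factor: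
`Δ₁(ε;k) = (1−ε)·ψ(n−1,n−k−1,ε)/Σ_{q=n−k−1}^{n−1} ψ(n−1,q,ε)`. -/
noncomputable def Delta1 (n k : ℕ) (ε : ℝ) : ℝ :=
  (1 - ε) * psi (n - 1) (n - k - 1) ε /
    ∑ q ∈ Icc (n - k - 1) (n - 1), psi (n - 1) q ε

noncomputable def Paux (m r : ℕ) (x : ℝ) : ℝ :=
  ∑ q ∈ Icc r m, (m.choose q : ℝ) * x ^ (q - r)

noncomputable def Qaux (m r : ℕ) (x : ℝ) : ℝ := (1 + x) * Paux m r x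

lemma Paux_pos (m r : ℕ) (hr : r ≤ m) {x : ℝ} (hx : 0 ≤ x) : 0 < Paux m r x := by
  unfold Paux
  apply Finset.sum_pos'
  · intro q _; positivity
  · refine ⟨r, Finset.mem_Icc.2 ⟨le_refl r, hr⟩, ?_⟩
    simp only [Nat.sub_self, pow_zero, mul_one]
    exact_mod_cast Nat.choose_pos hr

lemma Paux_one_le (m r : ℕ) (hr : r ≤ m) {x : ℝ} (hx : 0 ≤ x) : 1 ≤ Paux m r x := by
  have h1 : ((m.choose r : ℝ)) * x ^ (r - r) ≤ Paux m r x := by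
    unfold Paux
    exact Finset.single_le_sum (f := fun q => (m.choose q : ℝ) * x ^ (q - r))
      (fun q _ => by positivity) (Finset.mem_Icc.2 ⟨le_refl r, hr⟩)
  have h2 : (1 : ℝ) ≤ (m.choose r : ℝ) := by exact_mod_cast Nat.choose_pos hr
  simp only [Nat.sub_self, pow_zero, mul_one] at h1
  linarith

lemma Paux_mono (m r : ℕ) {a b : ℝ} (ha : 0 ≤ a) (hab : a ≤ b) : Paux m r a ≤ Paux m r b := by
  apply Finset.sum_le_sum
  intro q _
  exact mul_le_mul_of_nonneg_left (pow_le_pow_left₀ ha hab _) (by positivity)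

lemma Qaux_pos (m r : ℕ) (hr : r ≤ m) {x : ℝ} (hx : 0 ≤ x) : 0 < Qaux m r x :=
  mul_pos (by linarith) (Paux_pos m r hr hx)

lemma Qaux_strictMono (m r : ℕ) (hr : r ≤ m) {a b : ℝ} (ha : 0 ≤ a) (hab : a < b) :
    Qaux m r a < Qaux m r b :=
  mul_lt_mul (by linarith) (Paux_mono m r ha hab.le) (Paux_pos m r hr ha) (by linarith)

lemma Qaux_zero (m r : ℕ) (hr : r ≤ m) : Qaux m r 0 = (m.choose r : ℝ) := by
  unfold Qaux Paux
  rw [Finset.sum_eq_single r]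
  · simp
  · intro q hq hne
    obtain ⟨h1, _⟩ := Finset.mem_Icc.1 hq
    rw [zero_pow (by omega), mul_zero]
  · intro h; exact absurd (Finset.mem_Icc.2 ⟨le_refl r, hr⟩) h

lemma Qaux_ge (m r : ℕ) (hr : r ≤ m) {x : ℝ} (hx : 0 ≤ x) : 1 + x ≤ Qaux m r x := by
  have := Paux_one_le m r hr hx
  calc 1 + x = (1 + x) * 1 := by ring
  _ ≤ (1 + x) * Paux m r x := mul_le_mul_of_nonneg_left this (by linarith)

lemma Delta1_eq (n k : ℕ) {ε : ℝ} (hε : ε ∈ Set.Ioo (0 : ℝ) 1) :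
    Delta1 n k ε = ((n-1).choose (n-k-1) : ℝ) / Qaux (n-1) (n-k-1) (ε / (1-ε)) := by
  obtain ⟨hε0, hε1⟩ := hε
  have h1ε : (0:ℝ) < 1 - ε := by linarith
  have hr : n - k - 1 ≤ n - 1 := by omega
  have hsum : ∑ q ∈ Icc (n-k-1) (n-1), psi (n-1) q ε
      = ε ^ (n-k-1) * (1-ε) ^ ((n-1) - (n-k-1)) * Paux (n-1) (n-k-1) (ε/(1-ε)) := by
    unfold Paux
    rw [Finset.mul_sum]
    refine Finset.sum_congr rfl fun q hq => ?_
    obtain ⟨hrq, hqm⟩ := Finset.mem_Icc.1 hq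
    unfold psi
    rw [div_pow]
    have e1 : ε ^ q = ε ^ (n-k-1) * ε ^ (q - (n-k-1)) := by
      rw [← pow_add]; congr 1; omega
    have e2 : (1-ε) ^ ((n-1) - (n-k-1)) = (1-ε) ^ ((n-1) - q) * (1-ε) ^ (q - (n-k-1)) := by
      rw [← pow_add]; congr 1; omega
    rw [e1, e2]
    field_simp
  have hP : 0 < Paux (n-1) (n-k-1) (ε/(1-ε)) := Paux_pos _ _ hr (by positivity)
  have hxx : 1 + ε/(1-ε) = 1/(1-ε) := by field_simp; ring
  unfold Delta1
  rw [hsum]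
  unfold psi Qaux
  rw [hxx]
  field_simp

/-- For every `k ∈ {1,…,n−1}`: `Δ₁(ε;k) → 1` as `ε → 0⁺` and `Δ₁(ε;k) → 0` as
`ε → 1⁻`.  Consequently, for every threshold `t ∈ (0,1)` there is a unique
`ε_k ∈ (0,1)` with `Δ₁(ε_k;k) = t`, and `Δ₁(ε;k) > t` iff `0 < ε < ε_k`. -/
theorem Delta1_limits_and_threshold (n : ℕ) (hn : 2 ≤ n)
    (k : ℕ) (hk1 : 1 ≤ k) (hk2 : k ≤ n - 1) :
    Tendsto (fun ε => Delta1 n k ε) (nhdsWithin 0 (Set.Ioi 0)) (nhds 1) ∧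
    Tendsto (fun ε => Delta1 n k ε) (nhdsWithin 1 (Set.Iio 1)) (nhds 0) ∧
    ∀ t : ℝ, 0 < t → t < 1 →
      ∃ εk : ℝ, εk ∈ Set.Ioo (0 : ℝ) 1 ∧ Delta1 n k εk = t ∧
        (∀ ε' ∈ Set.Ioo (0 : ℝ) 1, Delta1 n k ε' = t → ε' = εk) ∧
        ∀ ε ∈ Set.Ioo (0 : ℝ) 1, (Delta1 n k ε > t ↔ ε < εk) := by
  have hr : n - k - 1 ≤ n - 1 := by omega
  set C : ℝ := ((n-1).choose (n-k-1) : ℝ) with hCdef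
  have hC : 0 < C := by
    rw [hCdef]; exact_mod_cast Nat.choose_pos hr
  have hQcont : Continuous (Qaux (n-1) (n-k-1)) := by
    unfold Qaux Paux; fun_prop
  have hkey : ∀ ε ∈ Set.Ioo (0:ℝ) 1,
      Delta1 n k ε = C / Qaux (n-1) (n-k-1) (ε/(1-ε)) := fun ε hε => Delta1_eq n k hε
  have hIoo0 : Set.Ioo (0:ℝ) 1 ∈ 𝓝[>] (0:ℝ) :=
    Ioo_mem_nhdsGT_of_mem (by norm_num)
  have hIoo1 : Set.Ioo (0:ℝ) 1 ∈ 𝓝[<] (1:ℝ) :=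
    Ioo_mem_nhdsLT_of_mem (by norm_num)
  -- limit at 0⁺
  have hx0 : Tendsto (fun ε : ℝ => ε/(1-ε)) (𝓝[>](0:ℝ)) (𝓝 0) := by
    have hc : ContinuousAt (fun ε : ℝ => ε/(1-ε)) 0 :=
      ContinuousAt.div continuousAt_id (by fun_prop) (by norm_num)
    have h := hc.tendsto
    simp only [one_div, sub_zero, div_one] at h
    simpa using h.mono_left nhdsWithin_le_nhds
  have hlim0 : Tendsto (fun ε => Delta1 n k ε) (𝓝[>](0:ℝ)) (𝓝 1) := by
    have h2 : Tendsto (fun ε : ℝ => C / Qaux (n-1) (n-k-1) (ε/(1-ε))) (𝓝[>](0:ℝ))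
        (𝓝 (C / Qaux (n-1) (n-k-1) 0)) :=
      tendsto_const_nhds.div ((hQcont.tendsto 0).comp hx0)
        (by rw [Qaux_zero _ _ hr]; exact hC.ne')
    rw [Qaux_zero _ _ hr, ← hCdef, div_self hC.ne'] at h2
    exact h2.congr' (by filter_upwards [hIoo0] with ε hε using (hkey ε hε).symm)
  -- limit at 1⁻
  have hx1 : Tendsto (fun ε : ℝ => ε/(1-ε)) (𝓝[<](1:ℝ)) atTop := by
    have h1 : Tendsto (fun ε : ℝ => 1 - ε) (𝓝[<](1:ℝ)) (𝓝[>](0:ℝ)) := by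
      apply tendsto_nhdsWithin_of_tendsto_nhds_of_eventually_within
      · have hc : ContinuousAt (fun ε : ℝ => 1 - ε) 1 := by fun_prop
        have h := hc.tendsto
        simp only [sub_self] at h
        exact h.mono_left nhdsWithin_le_nhds
      · filter_upwards [self_mem_nhdsWithin] with ε hε
        simp only [Set.mem_Iio] at hε
        simp only [Set.mem_Ioi]
        linarith
    have hinv : Tendsto (fun ε : ℝ => (1-ε)⁻¹) (𝓝[<](1:ℝ)) atTop := h1.inv_tendsto_nhdsGT_zero
    have hnum : Tendsto (fun ε : ℝ => ε) (𝓝[<](1:ℝ)) (𝓝 1) :=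
      tendsto_id.mono_right nhdsWithin_le_nhds
    have := hnum.pos_mul_atTop one_pos hinv
    simpa [div_eq_mul_inv] using this
  have hQtop : Tendsto (fun ε : ℝ => Qaux (n-1) (n-k-1) (ε/(1-ε))) (𝓝[<](1:ℝ)) atTop := by
    refine tendsto_atTop_mono' _ ?_ (tendsto_atTop_add_const_left _ 1 hx1)
    filter_upwards [hIoo1] with ε hε
    exact Qaux_ge _ _ hr (div_nonneg hε.1.le (by linarith [hε.2]))
  have hlim1 : Tendsto (fun ε => Delta1 n k ε) (𝓝[<](1:ℝ)) (𝓝 0) := by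
    have h2 := Tendsto.div_atTop (tendsto_const_nhds : Tendsto (fun _ : ℝ => C) (𝓝[<](1:ℝ)) (𝓝 C)) hQtop
    exact h2.congr' (by filter_upwards [hIoo1] with ε hε using (hkey ε hε).symm)
  -- strict antitonicity
  have hanti : StrictAntiOn (fun ε => Delta1 n k ε) (Set.Ioo (0:ℝ) 1) := by
    intro a ha b hb hab
    simp only
    rw [hkey a ha, hkey b hb]
    have hxa : 0 ≤ a/(1-a) := div_nonneg ha.1.le (by linarith [ha.2])
    have hxab : a/(1-a) < b/(1-b) := by
      rw [div_lt_div_iff₀ (by linarith [ha.2]) (by linarith [hb.2])]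
      nlinarith [ha.1, hb.2]
    exact div_lt_div_of_pos_left hC (Qaux_pos _ _ hr hxa) (Qaux_strictMono _ _ hr hxa hxab)
  refine ⟨hlim0, hlim1, ?_⟩
  intro t ht0 ht1
  obtain ⟨ε0, hε0t, hε0m⟩ := (hlim0.eventually (eventually_gt_nhds ht1)).and
    (Filter.eventually_mem_set.2 hIoo0) |>.exists
  obtain ⟨ε1, hε1t, hε1m⟩ := (hlim1.eventually (eventually_lt_nhds ht0)).and
    (Filter.eventually_mem_set.2 (Ioo_mem_nhdsLT_of_mem (Set.mem_Ioc.2 ⟨hε0m.2, le_refl 1⟩)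
      : Set.Ioo ε0 1 ∈ 𝓝[<](1:ℝ))) |>.exists
  have hε01 : ε0 < ε1 := hε1m.1
  have hε1mem : ε1 ∈ Set.Ioo (0:ℝ) 1 := ⟨lt_trans hε0m.1 hε01, hε1m.2⟩
  have hsub : Set.Icc ε0 ε1 ⊆ Set.Ioo (0:ℝ) 1 := fun x hx =>
    ⟨lt_of_lt_of_le hε0m.1 hx.1, lt_of_le_of_lt hx.2 hε1mem.2⟩
  have hcont : ContinuousOn (fun ε => Delta1 n k ε) (Set.Icc ε0 ε1) := by
    apply ContinuousOn.congr (f := fun ε : ℝ => C / Qaux (n-1) (n-k-1) (ε/(1-ε)))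
    · apply ContinuousOn.div continuousOn_const
      · apply hQcont.comp_continuousOn
        apply ContinuousOn.div continuousOn_id (by fun_prop)
        intro x hx
        have := (hsub hx).2
        intro h; linarith [sub_eq_zero.1 h]
      · intro x hx
        have hx0' : 0 ≤ x/(1-x) := div_nonneg (hsub hx).1.le (by linarith [(hsub hx).2])
        exact (Qaux_pos _ _ hr hx0').ne'
    · intro x hx
      exact hkey x (hsub hx)
  have ht_mem : t ∈ Set.Icc (Delta1 n k ε1) (Delta1 n k ε0) := ⟨hε1t.le, hε0t.le⟩
  obtain ⟨εk, hεkmem, hεkt⟩ := intermediate_value_Icc' hε01.le hcont ht_mem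
  have hεkIoo : εk ∈ Set.Ioo (0:ℝ) 1 := hsub hεkmem
  refine ⟨εk, hεkIoo, hεkt, ?_, ?_⟩
  · intro ε' hε' hε't
    exact hanti.injOn hε' hεkIoo (hε't.trans hεkt.symm)
  · intro ε hε
    constructor
    · intro hgt
      by_contra hle
      push_neg at hle
      rcases eq_or_lt_of_le hle with he | hlt
      · rw [he] at hεkt; linarith
      · have := hanti hεkIoo hε hlt
        simp only at this
        linarith
    · intro hlt
      have := hanti hε hεkIoo hlt
      simp only at this
      linarith
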